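/- Let M be a real symmetric 3×3 matrix, L ∈ ℝ³, K ∈ ℝ, and define f : ℝ³ → ℝ by f(r) = K + ⟨L, r⟩ + ⟨r, M r⟩. Let λ_min be the smallest eigenvalue of M and define g(r) = f(r) + λ_min (1 − |r|²). Then: (a) g is convex on ℝ³; (b) g agrees with f on the unit sphere {r : |r| = 1}; and (c) for every function h that is convex on the closed unit ball {r : |r| ≤ 1} and agrees with f on the unit sphere, one has h(r) ≤ g(r) for all r in the closed unit ball. That is, g is the largest convex function on the closed unit ball agreeing with f on the unit sphere. -/

import Mathlib

open Matrix

noncomputable section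

/-- Largest-convex-extension lemma: for a quadratic form f(r) = K + ⟨L,r⟩ + ⟨r,Mr⟩ on ℝ³
with M real symmetric, the function g(r) = f(r) + λ_min(1 − |r|²), with λ_min the smallest
eigenvalue of M, is (a) convex on ℝ³, (b) agrees with f on the unit sphere, and (c) is the
largest function convex on the closed unit ball agreeing with f on the unit sphere. -/
theorem largest_convex_quadratic (M : Matrix (Fin 3) (Fin 3) ℝ) (hM : M.IsSymm)
    (L : Fin 3 → ℝ) (K : ℝ) (f g : (Fin 3 → ℝ) → ℝ)
    (hf : ∀ r, f r = K + L ⬝ᵥ r + r ⬝ᵥ (M *ᵥ r))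
    (lam : ℝ) (hlam : IsLeast {μ : ℝ | ∃ w : Fin 3 → ℝ, w ≠ 0 ∧ M *ᵥ w = μ • w} lam)
    (hg : ∀ r, g r = f r + lam * (1 - r ⬝ᵥ r)) :
    ConvexOn ℝ Set.univ g ∧
    (∀ r : Fin 3 → ℝ, r ⬝ᵥ r = 1 → g r = f r) ∧
    (∀ h : (Fin 3 → ℝ) → ℝ,
      ConvexOn ℝ {r : Fin 3 → ℝ | r ⬝ᵥ r ≤ 1} h →
      (∀ r : Fin 3 → ℝ, r ⬝ᵥ r = 1 → h r = f r) →
      ∀ r : Fin 3 → ℝ, r ⬝ᵥ r ≤ 1 → h r ≤ g r) := by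
  classical
  -- M - lam • 1 is Hermitian
  have hA : (M - lam • (1 : Matrix (Fin 3) (Fin 3) ℝ)).IsHermitian := by
    rw [Matrix.IsHermitian, conjTranspose_eq_transpose_of_trivial, transpose_sub,
      transpose_smul, transpose_one, hM.eq]
  -- M - lam • 1 is positive semidefinite
  have hpsd : (M - lam • (1 : Matrix (Fin 3) (Fin 3) ℝ)).PosSemidef := by
    apply hA.posSemidef_iff_eigenvalues_nonneg.mpr
    intro i
    have hv0 : ⇑(hA.eigenvectorBasis i) ≠ (0 : Fin 3 → ℝ) :=
      fun h0 => hA.eigenvectorBasis.orthonormal.ne_zero i (by simpa using congrArg (WithLp.toLp 2) h0)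
    have hev := hA.mulVec_eigenvectorBasis i
    rw [sub_mulVec, smul_mulVec, one_mulVec, sub_eq_iff_eq_add] at hev
    have hmem : hA.eigenvalues i + lam ∈
        {μ : ℝ | ∃ w : Fin 3 → ℝ, w ≠ 0 ∧ M *ᵥ w = μ • w} := by
      refine ⟨_, hv0, ?_⟩
      rw [hev, add_smul]
    show (0 : ℝ) ≤ hA.eigenvalues i; linarith [hlam.2 hmem]
  -- key inequality
  have key : ∀ x : Fin 3 → ℝ, lam * (x ⬝ᵥ x) ≤ x ⬝ᵥ (M *ᵥ x) := by
    intro x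
    have h0 := hpsd.dotProduct_mulVec_nonneg x
    rw [star_trivial, sub_mulVec, smul_mulVec, one_mulVec, dotProduct_sub,
      dotProduct_smul, smul_eq_mul] at h0
    linarith
  -- symmetry of the bilinear form
  have hsymm : ∀ u v : Fin 3 → ℝ, u ⬝ᵥ (M *ᵥ v) = v ⬝ᵥ (M *ᵥ u) := by
    intro u v
    rw [dotProduct_mulVec, ← mulVec_transpose, hM.eq, dotProduct_comm]
  refine ⟨⟨convex_univ, ?_⟩, ?_, ?_⟩
  · -- (a) convexity of g on univ
    intro x _ y _ a b ha hb hab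
    have hk := key (x - y)
    have e1 : (x - y) ⬝ᵥ (M *ᵥ (x - y)) =
        x ⬝ᵥ (M *ᵥ x) - x ⬝ᵥ (M *ᵥ y) - y ⬝ᵥ (M *ᵥ x) + y ⬝ᵥ (M *ᵥ y) := by
      simp only [mulVec_sub, dotProduct_sub, sub_dotProduct]
      ring
    have e2 : (x - y) ⬝ᵥ (x - y) = x ⬝ᵥ x - 2 * (x ⬝ᵥ y) + y ⬝ᵥ y := by
      simp only [dotProduct_sub, sub_dotProduct, dotProduct_comm y x]
      ring
    rw [e1, e2] at hk
    have bilM : (a • x + b • y) ⬝ᵥ (M *ᵥ (a • x + b • y)) =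
        a * a * (x ⬝ᵥ (M *ᵥ x)) + a * b * (x ⬝ᵥ (M *ᵥ y)) + a * b * (y ⬝ᵥ (M *ᵥ x))
          + b * b * (y ⬝ᵥ (M *ᵥ y)) := by
      simp only [mulVec_add, mulVec_smul, dotProduct_add, add_dotProduct, smul_dotProduct,
        dotProduct_smul, smul_eq_mul]
      ring
    have bilI : (a • x + b • y) ⬝ᵥ (a • x + b • y) =
        a * a * (x ⬝ᵥ x) + 2 * (a * b) * (x ⬝ᵥ y) + b * b * (y ⬝ᵥ y) := by
      simp only [dotProduct_add, add_dotProduct, smul_dotProduct, dotProduct_smul, smul_eq_mul,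
        dotProduct_comm y x]
      ring
    have bilL : L ⬝ᵥ (a • x + b • y) = a * (L ⬝ᵥ x) + b * (L ⬝ᵥ y) := by
      simp only [dotProduct_add, dotProduct_smul, smul_eq_mul]
    obtain rfl : b = 1 - a := by linarith
    simp only [smul_eq_mul, hg, hf, bilM, bilI, bilL]
    nlinarith [mul_nonneg ha hb, hk]
  · -- (b) g = f on the sphere
    intro r hr
    rw [hg, hr]
    ring
  · -- (c) maximality
    intro h hconv hsph r hr
    by_cases hr1 : r ⬝ᵥ r = 1
    · rw [hsph r hr1, hg, hr1]
      simp
    have hrlt : r ⬝ᵥ r < 1 := lt_of_le_of_ne hr hr1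
    obtain ⟨⟨w, hw0, hww⟩, -⟩ := hlam
    have haw : 0 < w ⬝ᵥ w := by
      rcases lt_or_eq_of_le (Finset.sum_nonneg fun i _ => mul_self_nonneg (w i)) with h' | h'
      · exact h'
      · exact absurd ((dotProduct_self_eq_zero).mp h'.symm) hw0
    obtain ⟨a, ha_def⟩ : ∃ a, w ⬝ᵥ w = a := ⟨_, rfl⟩
    obtain ⟨c, hc_def⟩ : ∃ c, r ⬝ᵥ w = c := ⟨_, rfl⟩
    obtain ⟨R, hR_def⟩ : ∃ R, r ⬝ᵥ r = R := ⟨_, rfl⟩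
    rw [ha_def] at haw
    rw [hR_def] at hrlt
    have hD : 0 < c ^ 2 + a * (1 - R) := by nlinarith [sq_nonneg c]
    obtain ⟨s, hs, hs2⟩ : ∃ s : ℝ, 0 < s ∧ s ^ 2 = c ^ 2 + a * (1 - R) :=
      ⟨Real.sqrt _, Real.sqrt_pos.mpr hD, Real.sq_sqrt hD.le⟩
    have hcs : c ^ 2 < s ^ 2 := by nlinarith
    have hsc1 : 0 < s + c := by nlinarith
    have hsc2 : 0 < s - c := by nlinarith
    obtain ⟨t1, ht1⟩ : ∃ t1 : ℝ, (-c + s) / a = t1 := ⟨_, rfl⟩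
    obtain ⟨t2, ht2⟩ : ∃ t2 : ℝ, (-c - s) / a = t2 := ⟨_, rfl⟩
    obtain ⟨θ, hθ⟩ : ∃ θ : ℝ, (c + s) / (2 * s) = θ := ⟨_, rfl⟩
    have ha0 : a ≠ 0 := ne_of_gt haw
    have hs0 : s ≠ 0 := ne_of_gt hs
    -- scalar identities
    have hq1s : a * t1 ^ 2 + 2 * c * t1 + (R - 1) = 0 := by
      rw [← ht1]; field_simp; linear_combination hs2
    have hq2s : a * t2 ^ 2 + 2 * c * t2 + (R - 1) = 0 := by
      rw [← ht2]; field_simp; linear_combination hs2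
    have hθ0 : 0 ≤ θ := by
      rw [← hθ]; exact div_nonneg (by linarith) (by linarith)
    have hθ1 : 0 ≤ 1 - θ := by
      rw [← hθ, sub_nonneg, div_le_one (by linarith)]; linarith
    have h01 : θ * t1 + (1 - θ) * t2 = 0 := by
      rw [← ht1, ← ht2, ← hθ]; field_simp; ring
    have h02 : a * (θ * t1 ^ 2 + (1 - θ) * t2 ^ 2) = 1 - R := by
      rw [← ht1, ← ht2, ← hθ]; field_simp; linear_combination 2 * s * hs2
    -- geometric facts
    have expand : ∀ t : ℝ, (r + t • w) ⬝ᵥ (r + t • w) = R + 2 * t * c + t ^ 2 * a := by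
      intro t
      simp only [dotProduct_add, add_dotProduct, smul_dotProduct, dotProduct_smul, smul_eq_mul,
        dotProduct_comm w r, hc_def, ha_def, hR_def]
      ring
    have hp1 : (r + t1 • w) ⬝ᵥ (r + t1 • w) = 1 := by
      rw [expand]; linear_combination hq1s
    have hq1 : (r + t2 • w) ⬝ᵥ (r + t2 • w) = 1 := by
      rw [expand]; linear_combination hq2s
    have hcomb : θ • (r + t1 • w) + (1 - θ) • (r + t2 • w) = r := by
      funext i
      simp only [Pi.add_apply, Pi.smul_apply, smul_eq_mul]
      linear_combination w i * h01
    have hfval : ∀ t : ℝ, f (r + t • w) = K + L ⬝ᵥ r + r ⬝ᵥ (M *ᵥ r)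
        + t * (L ⬝ᵥ w + 2 * lam * c) + t ^ 2 * (lam * a) := by
      intro t
      rw [hf]
      have hMw : ∀ u : Fin 3 → ℝ, u ⬝ᵥ (M *ᵥ w) = lam * (u ⬝ᵥ w) := by
        intro u
        rw [hww, dotProduct_smul, smul_eq_mul]
      have hwMr : w ⬝ᵥ (M *ᵥ r) = lam * c := by
        rw [hsymm w r, hMw r, hc_def]
      simp only [mulVec_add, mulVec_smul, dotProduct_add, add_dotProduct, smul_dotProduct,
        dotProduct_smul, smul_eq_mul, hMw, hwMr, dotProduct_comm w r, hc_def, ha_def]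
      ring
    have hchord := hconv.2 (le_of_eq hp1) (le_of_eq hq1) hθ0 hθ1 (by ring)
    rw [hcomb, hsph _ hp1, hsph _ hq1] at hchord
    have hfinal : θ * f (r + t1 • w) + (1 - θ) * f (r + t2 • w) = g r := by
      rw [hfval, hfval, hg, hf, hR_def]
      linear_combination (L ⬝ᵥ w + 2 * lam * c) * h01 + lam * h02
    calc h r ≤ θ • f (r + t1 • w) + (1 - θ) • f (r + t2 • w) := hchord
      _ = g r := by rw [smul_eq_mul, smul_eq_mul]; exact hfinal
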